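/- Let E be a finite-dimensional real normed space, let h, θ, γ ≥ 1 be natural numbers, and let φ be a Radon measure on E with compact support. Let x ∈ E(θ,γ), let 0 < r < 1/γ, and let 0 < δ < θ^{-1}·2^{-(4h+5)}. Suppose V is an h-dimensional linear subspace of E for which there exists Θ > 0 with F_{x,r}(φ, Θ·(μH^h⌞(x+V))) ≤ 2δ r^{h+1}. Then every w ∈ E(θ,γ) ∩ B̄(x, r/4) satisfies dist(w, x+V) ≤ 2^{1+1/(h+1)} · θ^{1/(h+1)} · δ^{1/(h+1)} · r, where x+V := {x+v : v ∈ V}. -/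

import Mathlib

open MeasureTheory Metric Filter Set
open scoped ENNReal NNReal Topology

variable {E : Type*}

/-- The support of a measure: points all of whose neighborhoods have positive measure. -/
def msupport [NormedAddCommGroup E] [MeasurableSpace E] (φ : Measure E) : Set E :=
  {x : E | ∀ r : ℝ, 0 < r → 0 < φ (ball x r)}

/-- The set `E(θ,γ)` of points of the support where the measure of balls of radius `r < 1/γ`
is comparable to `r ^ h` with constant `θ`. -/
def Eset [NormedAddCommGroup E] [MeasurableSpace E]
    (φ : Measure E) (h θ γ : ℕ) : Set E :=
  {x : E | x ∈ msupport φ ∧ ∀ r : ℝ, 0 < r → r < 1 / γ →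
    ENNReal.ofReal (r ^ h / θ) ≤ φ (closedBall x r) ∧
    φ (closedBall x r) ≤ ENNReal.ofReal (θ * r ^ h)}

/-- The distance `F_K` between two measures: the supremum of the differences of integrals of
nonnegative `1`-Lipschitz functions vanishing outside `K`. -/
noncomputable def Fdist [NormedAddCommGroup E] [MeasurableSpace E]
    (φ ψ : Measure E) (K : Set E) : ℝ :=
  sSup {d : ℝ | ∃ f : E → ℝ, (∀ x, 0 ≤ f x) ∧ LipschitzWith 1 f ∧ (∀ x ∉ K, f x = 0) ∧
    d = |(∫ x, f x ∂φ) - ∫ x, f x ∂ψ|}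

/-- Upper bound on an integral of a nonnegative function vanishing outside a set of finite
measure and bounded by a constant. -/
lemma aux_integral_le [NormedAddCommGroup E] [MeasurableSpace E] [BorelSpace E]
    (μ : Measure E) (K : Set E) (hK : MeasurableSet K) (hfin : μ K ≠ ∞)
    (f : E → ℝ) (h0 : ∀ y, 0 ≤ f y) (hc : Continuous f) (hvan : ∀ y ∉ K, f y = 0)
    (C : ℝ) (hfC : ∀ y, f y ≤ C) : ∫ y, f y ∂μ ≤ C * (μ K).toReal := by
  have hC : 0 ≤ C := (h0 0).trans (hfC 0)
  rw [integral_eq_lintegral_of_nonneg_ae (Filter.Eventually.of_forall h0)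
    hc.aestronglyMeasurable]
  have hle : ∫⁻ y, ENNReal.ofReal (f y) ∂μ ≤ ENNReal.ofReal C * μ K := by
    calc ∫⁻ y, ENNReal.ofReal (f y) ∂μ
        ≤ ∫⁻ y, K.indicator (fun _ => ENNReal.ofReal C) y ∂μ := by
          apply lintegral_mono
          intro y
          by_cases hy : y ∈ K
          · simpa [hy] using ENNReal.ofReal_le_ofReal (hfC y)
          · simp [hy, hvan y hy]
      _ = ENNReal.ofReal C * μ K := by
          rw [lintegral_indicator hK, setLIntegral_const]
  have hne : ENNReal.ofReal C * μ K ≠ ∞ := ENNReal.mul_ne_top ENNReal.ofReal_ne_top hfin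
  calc (∫⁻ y, ENNReal.ofReal (f y) ∂μ).toReal
      ≤ (ENNReal.ofReal C * μ K).toReal := ENNReal.toReal_mono hne hle
    _ = C * (μ K).toReal := by rw [ENNReal.toReal_mul, ENNReal.toReal_ofReal hC]

/-- Bounded pieces of an `h`-dimensional affine subspace have finite `h`-dimensional
Hausdorff measure. -/
lemma aux_hausdorff_fin [NormedAddCommGroup E] [NormedSpace ℝ E] [FiniteDimensional ℝ E]
    [MeasurableSpace E] [BorelSpace E] (h : ℕ) (V : Submodule ℝ E)
    (hV : Module.finrank ℝ V = h) (x : E) (ρ : ℝ) (hρ : 0 ≤ ρ) :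
    μH[(h : ℝ)] ((x + ·) '' (V : Set E) ∩ closedBall x ρ) ≠ ∞ := by
  classical
  have b : Module.Basis (Fin h) ℝ V := (Module.finBasis ℝ V).reindex (finCongr hV)
  set e : V ≃ₗ[ℝ] (Fin h → ℝ) := b.equivFun with he
  set L : (Fin h → ℝ) →ₗ[ℝ] E := V.subtype.comp e.symm.toLinearMap with hL
  set Lc : (Fin h → ℝ) →L[ℝ] E := LinearMap.toContinuousLinearMap L with hLc
  set ec : V →L[ℝ] (Fin h → ℝ) := LinearMap.toContinuousLinearMap e.toLinearMap with hec
  set g : (Fin h → ℝ) → E := fun u => x + Lc u with hg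
  have hglip : LipschitzWith ‖Lc‖₊ g := by
    apply LipschitzWith.of_dist_le_mul
    intro u v
    have : dist (g u) (g v) = dist (Lc u) (Lc v) := by
      simp [hg, dist_add_left]
    rw [this]
    exact Lc.lipschitz.dist_le_mul u v
  set R : ℝ := ‖ec‖ * ρ with hR
  have hsub : (x + ·) '' (V : Set E) ∩ closedBall x ρ ⊆ g '' (closedBall 0 R) := by
    rintro y ⟨⟨v, hvV, rfl⟩, hyball⟩
    refine ⟨e ⟨v, hvV⟩, ?_, ?_⟩
    · rw [mem_closedBall_zero_iff]
      have h1 : e ⟨v, hvV⟩ = ec ⟨v, hvV⟩ := rfl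
      rw [h1]
      calc ‖ec ⟨v, hvV⟩‖ ≤ ‖ec‖ * ‖(⟨v, hvV⟩ : V)‖ := ec.le_opNorm _
        _ ≤ ‖ec‖ * ρ := by
            have hvρ : ‖(⟨v, hvV⟩ : V)‖ ≤ ρ := by
              have h2 : dist (x + v) x ≤ ρ := hyball
              rw [dist_eq_norm, add_sub_cancel_left] at h2
              exact h2
            exact mul_le_mul_of_nonneg_left hvρ ec.opNorm_nonneg
    · show x + Lc (e ⟨v, hvV⟩) = x + v
      congr 1
      show (e.symm (e ⟨v, hvV⟩) : E) = v
      rw [e.symm_apply_apply]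
  have hcard : ((h : ℝ)) = ((Fintype.card (Fin h) : ℕ) : ℝ) := by simp
  have hfinvol : μH[(h : ℝ)] (closedBall (0 : Fin h → ℝ) R) ≠ ∞ := by
    rw [hcard, hausdorffMeasure_pi_real]
    exact (isCompact_closedBall (0 : Fin h → ℝ) R).measure_lt_top.ne
  have hle := hglip.hausdorffMeasure_image_le (Nat.cast_nonneg h) (closedBall 0 R)
  have : μH[(h : ℝ)] ((x + ·) '' (V : Set E) ∩ closedBall x ρ)
      ≤ (‖Lc‖₊ : ℝ≥0∞) ^ (h : ℝ) * μH[(h : ℝ)] (closedBall (0 : Fin h → ℝ) R) :=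
    le_trans (measure_mono hsub) hle
  refine ne_top_of_le_ne_top ?_ this
  exact ENNReal.mul_ne_top (ENNReal.rpow_ne_top_of_nonneg (Nat.cast_nonneg h)
    ENNReal.coe_ne_top) hfinvol

theorem stmt5 [NormedAddCommGroup E] [NormedSpace ℝ E] [FiniteDimensional ℝ E]
    [MeasurableSpace E] [BorelSpace E]
    (h θ γ : ℕ) (h1 : 1 ≤ h) (hθ : 1 ≤ θ) (hγ : 1 ≤ γ)
    (φ : Measure E) [IsLocallyFiniteMeasure φ]
    (hcpt : ∃ K : Set E, IsCompact K ∧ φ Kᶜ = 0)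
    (x : E) (hx : x ∈ Eset φ h θ γ) (r : ℝ) (hr0 : 0 < r) (hrγ : r < 1 / γ)
    (δ : ℝ) (hδ0 : 0 < δ) (hδ : δ < ((θ : ℝ) * 2 ^ (4 * h + 5))⁻¹)
    (V : Submodule ℝ E) (hV : Module.finrank ℝ V = h)
    (Θ : ℝ) (hΘ : 0 < Θ)
    (hF : Fdist φ (ENNReal.ofReal Θ • (μH[(h : ℝ)].restrict ((x + ·) '' (V : Set E))))
        (closedBall x r) ≤ 2 * δ * r ^ (h + 1)) :
    ∀ w ∈ Eset φ h θ γ ∩ closedBall x (r / 4),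
      infDist w ((x + ·) '' (V : Set E)) ≤
        (2 : ℝ) ^ ((1 : ℝ) + 1 / ((h : ℝ) + 1)) * (θ : ℝ) ^ ((1 : ℝ) / ((h : ℝ) + 1)) *
          δ ^ ((1 : ℝ) / ((h : ℝ) + 1)) * r := by
  classical
  have hθR : (0 : ℝ) < θ := lt_of_lt_of_le one_pos (by exact_mod_cast hθ)
  intro w hw
  obtain ⟨hwE, hwB⟩ := hw
  set S : Set E := (x + ·) '' (V : Set E) with hSdef
  have hVclosed : IsClosed (V : Set E) := V.closed_of_finiteDimensional
  have hSclosed : IsClosed S := by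
    have := (Homeomorph.addLeft x).isClosedMap _ hVclosed
    simpa [hSdef] using this
  have hxS : x ∈ S := ⟨0, V.zero_mem, by simp⟩
  set d : ℝ := infDist w S with hd
  have hd0 : 0 ≤ d := infDist_nonneg
  have hRHS0 : (0 : ℝ) ≤ (2 : ℝ) ^ ((1 : ℝ) + 1 / ((h : ℝ) + 1)) *
      (θ : ℝ) ^ ((1 : ℝ) / ((h : ℝ) + 1)) * δ ^ ((1 : ℝ) / ((h : ℝ) + 1)) * r := by
    positivity
  rcases eq_or_lt_of_le hd0 with hdz | hdpos
  · linarith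
  -- `d ≤ r / 4`
  have hdr4 : d ≤ r / 4 := by
    calc d ≤ dist w x := infDist_le_dist_of_mem hxS
      _ ≤ r / 4 := mem_closedBall.mp hwB
  -- φ is a finite measure
  haveI hfinφ : IsFiniteMeasure φ := by
    obtain ⟨K, hKc, hK0⟩ := hcpt
    constructor
    calc φ univ = φ (K ∪ Kᶜ) := by rw [union_compl_self]
      _ ≤ φ K + φ Kᶜ := measure_union_le _ _
      _ < ∞ := by rw [hK0]; simpa using hKc.measure_lt_top
  set ψ : Measure E := ENNReal.ofReal Θ • (μH[(h : ℝ)].restrict S) with hψdef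
  set Kb : Set E := closedBall x r with hKb
  have hKbmeas : MeasurableSet Kb := measurableSet_closedBall
  have hψKb : ψ Kb ≠ ∞ := by
    have h2 : ψ Kb = ENNReal.ofReal Θ * μH[(h : ℝ)] (Kb ∩ S) := by
      rw [hψdef, Measure.smul_apply, smul_eq_mul, Measure.restrict_apply hKbmeas]
    rw [h2, inter_comm]
    exact ENNReal.mul_ne_top ENNReal.ofReal_ne_top
      (aux_hausdorff_fin h V hV x r hr0.le)
  have hφKb : φ Kb ≠ ∞ := measure_ne_top φ _
  -- a nonzero vector of `V`
  have hVnontriv : Nontrivial V := by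
    apply Module.nontrivial_of_finrank_pos (R := ℝ)
    rw [hV]; omega
  obtain ⟨v₀, hv₀ne⟩ := exists_ne (0 : V)
  have hv₀norm : (0 : ℝ) < ‖(v₀ : E)‖ := by
    rw [norm_pos_iff]
    exact fun hc => hv₀ne (by ext; simpa using hc)
  -- the set of values is bounded above
  set C : ℝ := 2 * r + 1 with hC
  have hbdd : BddAbove {a : ℝ | ∃ f : E → ℝ, (∀ y, 0 ≤ f y) ∧ LipschitzWith 1 f ∧
      (∀ y ∉ Kb, f y = 0) ∧ a = |(∫ y, f y ∂φ) - ∫ y, f y ∂ψ|} := by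
    refine ⟨C * (φ Kb).toReal + C * (ψ Kb).toReal, ?_⟩
    rintro a ⟨f, hf0, hflip, hfvan, rfl⟩
    have hfC : ∀ y, f y ≤ C := by
      intro y
      by_cases hy : y ∈ Kb
      · set z : E := x + ((r + 1) / ‖(v₀ : E)‖) • (v₀ : E) with hz
        have hzKb : z ∉ Kb := by
          rw [hKb, mem_closedBall]
          push_neg
          rw [hz, dist_eq_norm, add_sub_cancel_left, norm_smul, Real.norm_eq_abs,
            abs_of_pos (by positivity), div_mul_cancel₀ _ hv₀norm.ne']
          linarith
        have h3 : f y - f z ≤ dist y z := by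
          have := hflip.dist_le_mul y z
          rw [NNReal.coe_one, one_mul] at this
          calc f y - f z ≤ |f y - f z| := le_abs_self _
            _ = dist (f y) (f z) := (Real.dist_eq _ _).symm
            _ ≤ dist y z := this
        rw [hfvan z hzKb, sub_zero] at h3
        calc f y ≤ dist y z := h3
          _ ≤ dist y x + dist x z := dist_triangle _ _ _
          _ ≤ r + (r + 1) := by
              apply add_le_add (mem_closedBall.mp hy)
              rw [hz, dist_eq_norm]
              rw [show x - (x + ((r + 1) / ‖(v₀ : E)‖) • (v₀ : E)) =
                -(((r + 1) / ‖(v₀ : E)‖) • (v₀ : E)) by abel]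
              rw [norm_neg, norm_smul, Real.norm_eq_abs, abs_of_pos (by positivity),
                div_mul_cancel₀ _ hv₀norm.ne']
          _ = C := by rw [hC]; ring
      · rw [hfvan y hy, hC]; linarith
    have hint1 : ∫ y, f y ∂φ ≤ C * (φ Kb).toReal :=
      aux_integral_le φ Kb hKbmeas hφKb f hf0 hflip.continuous hfvan C hfC
    have hint2 : ∫ y, f y ∂ψ ≤ C * (ψ Kb).toReal :=
      aux_integral_le ψ Kb hKbmeas hψKb f hf0 hflip.continuous hfvan C hfC
    have hn1 : 0 ≤ ∫ y, f y ∂φ := integral_nonneg hf0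
    have hn2 : 0 ≤ ∫ y, f y ∂ψ := integral_nonneg hf0
    calc |(∫ y, f y ∂φ) - ∫ y, f y ∂ψ| ≤ |∫ y, f y ∂φ| + |∫ y, f y ∂ψ| := abs_sub _ _
      _ = (∫ y, f y ∂φ) + ∫ y, f y ∂ψ := by rw [abs_of_nonneg hn1, abs_of_nonneg hn2]
      _ ≤ C * (φ Kb).toReal + C * (ψ Kb).toReal := add_le_add hint1 hint2
  -- our test function
  set f : E → ℝ := fun y => max (d - dist w y) 0 with hf
  have hf0 : ∀ y, 0 ≤ f y := fun y => le_max_right _ _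
  have hflip : LipschitzWith 1 f := by
    have h0 : LipschitzWith 1 (fun t : ℝ => d - t) := by
      apply LipschitzWith.of_dist_le_mul
      intro a b
      simp only [Real.dist_eq, NNReal.coe_one, one_mul]
      rw [show d - a - (d - b) = -(a - b) by ring, abs_neg]
    exact ((h0.comp (LipschitzWith.dist_right w)).max_const 0).weaken (by norm_num)
  have hfvan : ∀ y ∉ Kb, f y = 0 := by
    intro y hy
    rw [hKb, mem_closedBall] at hy
    push_neg at hy
    have h4 : dist w y ≥ 3 * r / 4 := by
      have := dist_triangle y x w
      have hwx : dist x w ≤ r / 4 := by rw [dist_comm]; exact mem_closedBall.mp hwB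
      have h5 : dist y w = dist w y := dist_comm y w
      have h6 : dist y x ≤ dist y w + dist w x := dist_triangle y w x
      have hwx' : dist w x ≤ r / 4 := mem_closedBall.mp hwB
      rw [dist_comm y w] at h6
      linarith
    rw [hf]
    apply max_eq_right
    linarith
  -- `f` vanishes `ψ`-a.e.
  have hψae : ∫ y, f y ∂ψ = 0 := by
    apply integral_eq_zero_of_ae
    have hS0 : ψ Sᶜ = 0 := by
      rw [hψdef, Measure.smul_apply, smul_eq_mul,
        Measure.restrict_apply hSclosed.measurableSet.compl]
      simp
    have hmem : ∀ᵐ y ∂ψ, y ∈ S := by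
      rw [ae_iff]
      exact hS0
    filter_upwards [hmem] with y hyS
    have : d ≤ dist w y := infDist_le_dist_of_mem hyS
    rw [hf]
    simp only [Pi.zero_apply]
    apply max_eq_right
    linarith
  -- integrability of `f` w.r.t. `φ`
  have hcs : HasCompactSupport f := by
    apply HasCompactSupport.intro (isCompact_closedBall w d)
    intro y hy
    rw [mem_closedBall, dist_comm] at hy
    push_neg at hy
    apply max_eq_right
    linarith
  have hfint : Integrable f φ := hflip.continuous.integrable_of_hasCompactSupport hcs
  -- lower bound on the integral
  have hlow : (d / 2) ^ h / θ * (d / 2) ≤ ∫ y, f y ∂φ := by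
    have hball := (hwE.2 (d / 2) (by linarith) (by
      have : d / 2 < 1 / γ := by
        have hγR : (0 : ℝ) < 1 / γ := by
          apply div_pos one_pos
          exact_mod_cast hγ
        linarith [hdr4, hr0, hrγ]
      exact this)).1
    have hmeas : ((d / 2) ^ h / θ : ℝ) ≤ (φ (closedBall w (d / 2))).toReal := by
      have := ENNReal.toReal_mono (measure_ne_top φ _) hball
      rwa [ENNReal.toReal_ofReal (by positivity)] at this
    calc (d / 2) ^ h / θ * (d / 2)
        ≤ (φ (closedBall w (d / 2))).toReal * (d / 2) := by
          apply mul_le_mul_of_nonneg_right hmeas (by linarith)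
      _ = ∫ y in closedBall w (d / 2), (d / 2) ∂φ := by rw [setIntegral_const]; simp [mul_comm, measureReal_def]
      _ ≤ ∫ y in closedBall w (d / 2), f y ∂φ := by
          apply setIntegral_mono_on
          · exact integrableOn_const (measure_ne_top φ _)
          · exact hfint.integrableOn
          · exact measurableSet_closedBall
          · intro y hy
            rw [mem_closedBall, dist_comm] at hy
            rw [hf]
            have : d / 2 ≤ d - dist w y := by linarith
            exact this.trans (le_max_left _ _)
      _ ≤ ∫ y, f y ∂φ := setIntegral_le_integral hfint (Filter.Eventually.of_forall hf0)
  -- the value belongs to the `Fdist` set and is bounded by the sup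
  have hmem : (∫ y, f y ∂φ) ∈ {a : ℝ | ∃ f : E → ℝ, (∀ y, 0 ≤ f y) ∧ LipschitzWith 1 f ∧
      (∀ y ∉ Kb, f y = 0) ∧ a = |(∫ y, f y ∂φ) - ∫ y, f y ∂ψ|} := by
    refine ⟨f, hf0, hflip, hfvan, ?_⟩
    rw [hψae, sub_zero, abs_of_nonneg (integral_nonneg hf0)]
  have hsup : (∫ y, f y ∂φ) ≤ 2 * δ * r ^ (h + 1) := by
    have := le_csSup hbdd hmem
    calc (∫ y, f y ∂φ) ≤ Fdist φ ψ Kb := this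
      _ ≤ 2 * δ * r ^ (h + 1) := hF
  -- conclude
  have hkey : (d / 2) ^ (h + 1) ≤ 2 * θ * δ * r ^ (h + 1) := by
    have h7 : (d / 2) ^ h / θ * (d / 2) ≤ 2 * δ * r ^ (h + 1) := hlow.trans hsup
    have h8 : (d / 2) ^ (h + 1) = (d / 2) ^ h * (d / 2) := by ring
    rw [h8]
    rw [div_mul_eq_mul_div, div_le_iff₀ hθR] at h7
    calc (d / 2) ^ h * (d / 2) ≤ 2 * δ * r ^ (h + 1) * θ := h7
      _ = 2 * θ * δ * r ^ (h + 1) := by ring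
  set s : ℝ := (1 : ℝ) / ((h : ℝ) + 1) with hs
  have hs0 : 0 ≤ s := by positivity
  have hhs : ((h : ℝ) + 1) * s = 1 := by
    rw [hs]
    field_simp
  have hd2 : (0 : ℝ) ≤ d / 2 := by linarith
  have hrpow : ((d / 2) ^ (h + 1) : ℝ) ^ s ≤ (2 * θ * δ * r ^ (h + 1)) ^ s :=
    Real.rpow_le_rpow (by positivity) hkey hs0
  have hL : ((d / 2) ^ (h + 1) : ℝ) ^ s = d / 2 := by
    rw [← Real.rpow_natCast (d / 2) (h + 1), ← Real.rpow_mul hd2]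
    push_cast
    rw [hhs, Real.rpow_one]
  have hRpow : ((2 * θ * δ * r ^ (h + 1) : ℝ)) ^ s
      = (2 : ℝ) ^ s * (θ : ℝ) ^ s * δ ^ s * r := by
    rw [Real.mul_rpow (by positivity) (by positivity),
      Real.mul_rpow (by positivity) (by positivity),
      Real.mul_rpow (by positivity) (by positivity)]
    congr 1
    rw [← Real.rpow_natCast r (h + 1), ← Real.rpow_mul hr0.le]
    push_cast
    rw [hhs, Real.rpow_one]
  rw [hL, hRpow] at hrpow
  have h2s : (2 : ℝ) ^ ((1 : ℝ) + s) = 2 * (2 : ℝ) ^ s := by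
    rw [Real.rpow_add two_pos, Real.rpow_one]
  calc infDist w S = d := rfl
    _ ≤ 2 * ((2 : ℝ) ^ s * (θ : ℝ) ^ s * δ ^ s * r) := by linarith
    _ = (2 : ℝ) ^ ((1 : ℝ) + s) * (θ : ℝ) ^ s * δ ^ s * r := by rw [h2s]; ring
    _ = (2 : ℝ) ^ ((1 : ℝ) + 1 / ((h : ℝ) + 1)) * (θ : ℝ) ^ ((1 : ℝ) / ((h : ℝ) + 1)) *
          δ ^ ((1 : ℝ) / ((h : ℝ) + 1)) * r := by rw [hs]
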